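/- Let H be a real Hilbert space, V a closed subspace with orthogonal projection P : H → V, a, v ∈ H, and φ ∈ [0, π] with φ > ∠(v,V⊥). Then P[C_H(a, v, φ)] = V, i.e. the orthogonal projection of the cone C_H(a, v, φ) onto V is all of V. -/

import Mathlib

open scoped RealInnerProductSpace Classical

/-- The angle between a vector `v` and the orthogonal complement of `V`:
`∠(v,V⊥) = arccos (‖v - P v‖ / ‖v‖)` for `v ≠ 0` and `V ≠ H`, with the conventions
`∠(v,V⊥) = π` when `v = 0` or `V = H` (note that it gives `0` when `V = {0}`, `v ≠ 0`). -/
noncomputable def angleToPerp {H : Type*} [NormedAddCommGroup H] [InnerProductSpace ℝ H]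
    [CompleteSpace H] (V : Submodule ℝ H) [CompleteSpace V] (v : H) : ℝ :=
  if v = 0 ∨ V = ⊤ then Real.pi
  else Real.arccos (‖v - (Submodule.orthogonalProjection V v : H)‖ / ‖v‖)

/-- If `0 ≤ φ ≤ π` and `φ > ∠(v,V⊥)`, then `P[C_H(a,v,φ)] = V`. -/
theorem stmt9 {H : Type*} [NormedAddCommGroup H] [InnerProductSpace ℝ H] [CompleteSpace H]
    (V : Submodule ℝ H) [CompleteSpace V]
    (a v : H) (φ : ℝ) (hφ0 : 0 ≤ φ) (hφπ : φ ≤ Real.pi)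
    (hφψ : angleToPerp V v < φ) :
    (fun u : H => (Submodule.orthogonalProjection V u : H)) ''
        {u : H | ⟪u - a, v⟫ ≥ Real.cos φ * (‖u - a‖ * ‖v‖)} = (V : Set H) := by
  by_cases h : v = 0 ∨ V = ⊤
  · exfalso
    rw [angleToPerp, if_pos h] at hφψ
    linarith
  push_neg at h
  obtain ⟨hv, hV⟩ := h
  rw [angleToPerp, if_neg (by push_neg; exact ⟨hv, hV⟩)] at hφψ
  set q : H := v - (Submodule.orthogonalProjection V v : H) with hqdef
  have hvpos : (0:ℝ) < ‖v‖ := norm_pos_iff.mpr hv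
  have hq_mem : q ∈ Vᗮ := by
    have := V.sub_starProjection_mem_orthogonal v; rwa [Submodule.starProjection_apply] at this
  have hPvq : ⟪(Submodule.orthogonalProjection V v : H), q⟫ = 0 :=
    hq_mem (Submodule.orthogonalProjection V v : H) (Submodule.orthogonalProjection V v).2
  -- ‖q‖ ≤ ‖v‖
  have hqlev : ‖q‖ ≤ ‖v‖ := by
    have hdecomp : v = (Submodule.orthogonalProjection V v : H) + q := by rw [hqdef]; abel
    have hsq : ‖v‖ ^ 2 = ‖(Submodule.orthogonalProjection V v : H)‖ ^ 2 + ‖q‖ ^ 2 := by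
      have h := norm_add_sq_real ((Submodule.orthogonalProjection V v : H)) q
      rw [← hdecomp, hPvq] at h
      linarith
    nlinarith [norm_nonneg q, norm_nonneg v, norm_nonneg ((Submodule.orthogonalProjection V v : H))]
  have hr0 : 0 ≤ ‖q‖ / ‖v‖ := div_nonneg (norm_nonneg _) hvpos.le
  have hr1 : ‖q‖ / ‖v‖ ≤ 1 := (div_le_one hvpos).mpr hqlev
  -- cos φ * ‖v‖ < ‖q‖
  have hcos : Real.cos φ < ‖q‖ / ‖v‖ := by
    have := Real.cos_lt_cos_of_nonneg_of_le_pi (Real.arccos_nonneg _) hφπ hφψ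
    rwa [Real.cos_arccos (by linarith) hr1] at this
  have hδ : Real.cos φ * ‖v‖ < ‖q‖ := by
    rw [← lt_div_iff₀ hvpos] at *; exact hcos
  -- find a unit vector z ∈ Vᗮ with ⟪z, v⟫ = ‖q‖
  obtain ⟨z, hz_mem, hz_norm, hz_inner⟩ :
      ∃ z : H, z ∈ Vᗮ ∧ ‖z‖ = 1 ∧ ⟪z, v⟫ = ‖q‖ := by
    by_cases hq0 : q = 0
    · have hbot : Vᗮ ≠ ⊥ := fun hb => hV (Submodule.orthogonal_eq_bot_iff.mp hb)
      obtain ⟨z0, hz0mem, hz0ne⟩ := Submodule.exists_mem_ne_zero_of_ne_bot hbot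
      have hz0pos : (0:ℝ) < ‖z0‖ := norm_pos_iff.mpr hz0ne
      refine ⟨‖z0‖⁻¹ • z0, Vᗮ.smul_mem _ hz0mem, ?_, ?_⟩
      · rw [norm_smul, norm_inv, norm_norm, inv_mul_cancel₀ hz0pos.ne']
      · have hvP : v = (Submodule.orthogonalProjection V v : H) := sub_eq_zero.mp hq0
        have hvV : v ∈ V := hvP ▸ (Submodule.orthogonalProjection V v).2
        rw [real_inner_smul_left, real_inner_comm, hz0mem v hvV, hq0]
        simp
    · have hqpos : (0:ℝ) < ‖q‖ := norm_pos_iff.mpr hq0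
      refine ⟨‖q‖⁻¹ • q, Vᗮ.smul_mem _ hq_mem, ?_, ?_⟩
      · rw [norm_smul, norm_inv, norm_norm, inv_mul_cancel₀ hqpos.ne']
      · have hqv : ⟪q, v⟫ = ‖q‖ ^ 2 := by
          have hdecomp : v = (Submodule.orthogonalProjection V v : H) + q := by rw [hqdef]; abel
          rw [hdecomp, inner_add_right, real_inner_comm, hPvq, real_inner_self_eq_norm_sq]
          ring
        rw [real_inner_smul_left, hqv]
        field_simp
  -- prove set equality
  ext x
  simp only [Set.mem_image, Set.mem_setOf_eq, SetLike.mem_coe]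
  constructor
  · rintro ⟨u, -, rfl⟩
    exact (Submodule.orthogonalProjection V u).2
  · intro hx
    set δ : ℝ := ‖q‖ - Real.cos φ * ‖v‖ with hδdef
    have hδpos : 0 < δ := by linarith
    set t : ℝ := max ‖x - a‖ ((‖x - a‖ * ‖v‖ - ⟪x - a, v⟫) / δ) with htdef
    have ht1 : ‖x - a‖ ≤ t := le_max_left _ _
    have ht0 : 0 ≤ t := le_trans (norm_nonneg _) ht1
    have ht2 : ‖x - a‖ * ‖v‖ - ⟪x - a, v⟫ ≤ t * δ := by
      rw [← div_le_iff₀ hδpos]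
      exact le_max_right _ _
    refine ⟨x + t • z, ?_, ?_⟩
    · -- membership in the cone
      have hsub : x + t • z - a = (x - a) + t • z := by abel
      have h1 : ⟪x + t • z - a, v⟫ = ⟪x - a, v⟫ + t * ‖q‖ := by
        rw [hsub, inner_add_left, real_inner_smul_left, hz_inner]
      have htz : ‖t • z‖ = t := by
        rw [norm_smul, hz_norm, Real.norm_eq_abs, abs_of_nonneg ht0, mul_one]
      have h2 : |‖x + t • z - a‖ - t| ≤ ‖x - a‖ := by
        have := abs_norm_sub_norm_le (x + t • z - a) (t • z)
        rw [htz] at this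
        have heq : x + t • z - a - t • z = x - a := by abel
        rwa [heq] at this
      have h2a := (abs_le.mp h2).1
      have h2b := (abs_le.mp h2).2
      have hcb1 := Real.neg_one_le_cos φ
      have hcb2 := Real.cos_le_one φ
      have hn : 0 ≤ ‖x + t • z - a‖ := norm_nonneg _
      rw [h1]
      rw [hδdef] at ht2
      nlinarith [mul_le_mul_of_nonneg_right h2b hvpos.le,
        mul_le_mul_of_nonneg_right h2a hvpos.le,
        mul_nonneg ht0 hvpos.le, norm_nonneg (x - a)]
    · -- projection equals x
      have := Submodule.orthogonalProjectionOnto_apply_of_mem_orthogonal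
        (K := V) (Vᗮ.smul_mem t hz_mem)
      rw [map_add, this, add_zero]
      have := (V.starProjection_eq_self_iff (v := x)).mpr hx
      rwa [Submodule.starProjection_apply] at this
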